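/- If (W*, H*) is a global minimizer of F(W,H) = f(W H^T) + (λ/2)(‖W‖_F² + ‖H‖_F²) over R^{m×k} × R^{n×k}, and the convex problem min_X f(X) + λ‖X‖_* admits a global minimizer of rank at most k, then X* := W* (H*)^T is a global minimizer of f(X) + λ‖X‖_*. -/

import Mathlib

open Matrix

noncomputable def frobNorm {m n : ℕ} (X : Matrix (Fin m) (Fin n) ℝ) : ℝ :=
  Real.sqrt (∑ i, ∑ j, (X i j) ^ 2)

noncomputable def nuclearNorm {m n : ℕ} (X : Matrix (Fin m) (Fin n) ℝ) : ℝ :=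
  ∑ i, Real.sqrt (((by simpa [Matrix.conjTranspose_eq_transpose_of_trivial] using
    Matrix.isHermitian_conjTranspose_mul_self X : (Xᵀ * X).IsHermitian)).eigenvalues i)

namespace MFAux

lemma isHermitian_transpose_mul_self {m n : ℕ} (X : Matrix (Fin m) (Fin n) ℝ) :
    (Xᵀ * X).IsHermitian := by
  simpa [Matrix.conjTranspose_eq_transpose_of_trivial] using
    Matrix.isHermitian_conjTranspose_mul_self X

variable {m n : ℕ} (X : Matrix (Fin m) (Fin n) ℝ)

noncomputable def μ : Fin n → ℝ :=
  (isHermitian_transpose_mul_self X).eigenvalues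

noncomputable def v (i : Fin n) : Fin n → ℝ :=
  ⇑((isHermitian_transpose_mul_self X).eigenvectorBasis i)

lemma mu_nonneg (i : Fin n) : 0 ≤ μ X i := by
  have h : (Xᵀ * X).PosSemidef := by
    have := Matrix.posSemidef_conjTranspose_mul_self X
    simpa [Matrix.conjTranspose_eq_transpose_of_trivial] using this
  exact h.eigenvalues_nonneg i

lemma hAv (i : Fin n) : (Xᵀ * X) *ᵥ v X i = μ X i • v X i := by
  exact (isHermitian_transpose_mul_self X).mulVec_eigenvectorBasis i

lemma hvv (i j : Fin n) : v X i ⬝ᵥ v X j = if i = j then 1 else 0 := by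
  have h := (isHermitian_transpose_mul_self X).eigenvectorBasis.orthonormal
  rw [orthonormal_iff_ite] at h
  have := h i j
  simpa [PiLp.inner_apply, RCLike.inner_apply, dotProduct, v, mul_comm] using this

lemma hrows (a b : Fin n) : ∑ i, v X i a * v X i b = if a = b then 1 else 0 := by
  have hU := (isHermitian_transpose_mul_self X).eigenvectorUnitary.2
  rw [Matrix.mem_unitaryGroup_iff] at hU
  have := congrFun (congrFun (congrArg (fun M : Matrix (Fin n) (Fin n) ℝ => (M : Matrix (Fin n) (Fin n) ℝ)) hU) a) b
  simp only [Matrix.mul_apply, Matrix.star_apply, star_trivial, Matrix.one_apply] at this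
  simpa [v, Matrix.IsHermitian.eigenvectorUnitary_apply] using this

end MFAux

namespace MFAux
variable {m n : ℕ} (X : Matrix (Fin m) (Fin n) ℝ)

lemma hXv_orth (i j : Fin n) :
    (X *ᵥ v X i) ⬝ᵥ (X *ᵥ v X j) = if i = j then μ X j else 0 := by
  have h1 : v X i ⬝ᵥ ((Xᵀ * X) *ᵥ v X j) = (X *ᵥ v X i) ⬝ᵥ (X *ᵥ v X j) := by
    rw [← Matrix.mulVec_mulVec, Matrix.dotProduct_mulVec, Matrix.vecMul_transpose]
  rw [← h1, hAv, dotProduct_smul, hvv]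
  by_cases h : i = j <;> simp [h, mul_comm]

lemma hXv_norm (i : Fin n) : (X *ᵥ v X i) ⬝ᵥ (X *ᵥ v X i) = μ X i := by
  simpa using hXv_orth X i i

lemma hXv_zero {i : Fin n} (h : μ X i = 0) : X *ᵥ v X i = 0 := by
  have h1 := hXv_norm X i
  rw [h, dotProduct_self_eq_zero] at h1
  exact h1

lemma nuclear_eq : nuclearNorm X = ∑ i, Real.sqrt (μ X i) := rfl

lemma frobNorm_sq {m n : ℕ} (Y : Matrix (Fin m) (Fin n) ℝ) :
    frobNorm Y ^ 2 = ∑ i, ∑ j, Y i j ^ 2 := by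
  apply Real.sq_sqrt
  positivity

/-- reconstruction: X = ∑ i, (X vᵢ) vᵢᵀ -/
lemma reconstruct (a : Fin m) (b : Fin n) :
    ∑ i, (X *ᵥ v X i) a * v X i b = X a b := by
  have : ∀ i : Fin n, (X *ᵥ v X i) a * v X i b = ∑ c, X a c * (v X i c * v X i b) := by
    intro i
    rw [Matrix.mulVec, dotProduct, Finset.sum_mul]
    exact Finset.sum_congr rfl fun c _ => by ring
  simp_rw [this]
  rw [Finset.sum_comm]
  simp_rw [← Finset.mul_sum, hrows]
  simp

/-- Parseval: for any x, ∑ i, (vᵢ ⬝ x)² = x ⬝ x -/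
lemma parseval (x : Fin n → ℝ) : ∑ i, (v X i ⬝ᵥ x) ^ 2 = x ⬝ᵥ x := by
  have : ∀ i, (v X i ⬝ᵥ x) ^ 2 = ∑ c, ∑ d, (v X i c * v X i d) * (x c * x d) := by
    intro i
    rw [sq, dotProduct, Finset.sum_mul_sum]
    exact Finset.sum_congr rfl fun c _ => Finset.sum_congr rfl fun d _ => by ring
  simp_rw [this]
  rw [Finset.sum_comm]
  have swap : ∀ c : Fin n, ∑ i : Fin n, ∑ d : Fin n, v X i c * v X i d * (x c * x d)
      = ∑ d : Fin n, ∑ i : Fin n, v X i c * v X i d * (x c * x d) := fun c => by rw [Finset.sum_comm]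
  simp_rw [swap]
  simp_rw [← Finset.sum_mul, hrows]
  simp [dotProduct, sq]

end MFAux

namespace MFAux

lemma sum_dotProduct' {N d : ℕ} (f : Fin N → Fin d → ℝ) (w : Fin d → ℝ) :
    (∑ i, f i) ⬝ᵥ w = ∑ i, f i ⬝ᵥ w := by
  simp only [dotProduct, Finset.sum_apply, Finset.sum_mul]
  rw [Finset.sum_comm]

lemma dotProduct_sum' {N d : ℕ} (w : Fin d → ℝ) (f : Fin N → Fin d → ℝ) :
    w ⬝ᵥ (∑ i, f i) = ∑ i, w ⬝ᵥ f i := by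
  rw [dotProduct_comm, sum_dotProduct']
  exact Finset.sum_congr rfl fun i _ => dotProduct_comm _ _

lemma bessel {N d : ℕ} (u : Fin N → Fin d → ℝ)
    (horth : ∀ i j, i ≠ j → u i ⬝ᵥ u j = 0)
    (hnorm : ∀ i, u i ⬝ᵥ u i ≤ 1) (w : Fin d → ℝ) :
    ∑ i, (u i ⬝ᵥ w) ^ 2 ≤ w ⬝ᵥ w := by
  set c : Fin N → ℝ := fun i => u i ⬝ᵥ w with hc
  set s : Fin d → ℝ := ∑ i, c i • u i with hs
  have hr : (0:ℝ) ≤ (w - s) ⬝ᵥ (w - s) := by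
    apply Finset.sum_nonneg
    intro a _
    exact mul_self_nonneg _
  have hsw : s ⬝ᵥ w = ∑ i, c i ^ 2 := by
    rw [hs, sum_dotProduct']
    exact Finset.sum_congr rfl fun i _ => by rw [smul_dotProduct]; simp [hc, sq, smul_eq_mul]
  have hss : s ⬝ᵥ s = ∑ i, c i ^ 2 * (u i ⬝ᵥ u i) := by
    rw [hs, sum_dotProduct']
    refine Finset.sum_congr rfl fun i _ => ?_
    rw [smul_dotProduct, dotProduct_sum']
    have : ∀ j, u i ⬝ᵥ c j • u j = c j * (u i ⬝ᵥ u j) := fun j => by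
      rw [dotProduct_smul]; simp [smul_eq_mul]
    simp_rw [this]
    rw [Finset.sum_eq_single i]
    · simp [smul_eq_mul]; ring
    · intro j _ hj
      rw [horth i j (Ne.symm hj)]; ring
    · simp
  have hws : w ⬝ᵥ s = s ⬝ᵥ w := dotProduct_comm _ _
  have hexp : (w - s) ⬝ᵥ (w - s) = w ⬝ᵥ w - 2 * ∑ i, c i ^ 2 + ∑ i, c i ^ 2 * (u i ⬝ᵥ u i) := by
    rw [sub_dotProduct, dotProduct_sub, dotProduct_sub, hws, hsw, hss]
    ring
  have hterm : ∑ i, c i ^ 2 * (u i ⬝ᵥ u i) ≤ ∑ i, c i ^ 2 := by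
    refine Finset.sum_le_sum fun i _ => ?_
    calc c i ^ 2 * (u i ⬝ᵥ u i) ≤ c i ^ 2 * 1 :=
      mul_le_mul_of_nonneg_left (hnorm i) (sq_nonneg _)
    _ = c i ^ 2 := mul_one _
  rw [hexp] at hr
  linarith

lemma nuclear_le {m n k : ℕ} (W : Matrix (Fin m) (Fin k) ℝ) (H : Matrix (Fin n) (Fin k) ℝ) :
    nuclearNorm (W * Hᵀ) ≤ (frobNorm W ^ 2 + frobNorm H ^ 2) / 2 := by
  set X := W * Hᵀ with hX
  set u : Fin n → Fin m → ℝ :=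
    fun i => if μ X i = 0 then 0 else (Real.sqrt (μ X i))⁻¹ • (X *ᵥ v X i) with hu
  have hσ : ∀ i, Real.sqrt (μ X i) ^ 2 = μ X i := fun i => Real.sq_sqrt (mu_nonneg X i)
  have horth : ∀ i j, i ≠ j → u i ⬝ᵥ u j = 0 := by
    intro i j hij
    by_cases hi : μ X i = 0
    · simp [hu, hi, zero_dotProduct]
    by_cases hj : μ X j = 0
    · simp [hu, hi, hj, dotProduct_zero]
    simp only [hu, if_neg hi, if_neg hj]
    rw [smul_dotProduct, dotProduct_smul, hXv_orth, if_neg hij]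
    simp
  have hnorm : ∀ i, u i ⬝ᵥ u i ≤ 1 := by
    intro i
    by_cases hi : μ X i = 0
    · simp [hu, hi, zero_dotProduct]
    simp only [hu, if_neg hi]
    rw [smul_dotProduct, dotProduct_smul, hXv_norm]
    rw [smul_eq_mul, smul_eq_mul, ← mul_assoc, ← sq, ← Real.sqrt_inv, Real.sq_sqrt (inv_nonneg.mpr (mu_nonneg X i))]
    rw [inv_mul_cancel₀ hi]
  set p : Fin n → Fin k → ℝ := fun i => u i ᵥ* W with hp
  set q : Fin n → Fin k → ℝ := fun i => Hᵀ *ᵥ v X i with hq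
  have key : ∀ i, Real.sqrt (μ X i) ≤ (∑ c, p i c ^ 2 + ∑ c, q i c ^ 2) / 2 := by
    intro i
    by_cases hi : μ X i = 0
    · rw [hi, Real.sqrt_zero]
      have h1 : (0:ℝ) ≤ ∑ c, p i c ^ 2 := Finset.sum_nonneg fun c _ => sq_nonneg _
      have h2 : (0:ℝ) ≤ ∑ c, q i c ^ 2 := Finset.sum_nonneg fun c _ => sq_nonneg _
      linarith
    have h1 : Real.sqrt (μ X i) = u i ⬝ᵥ (X *ᵥ v X i) := by
      simp only [hu, if_neg hi]
      rw [smul_dotProduct, hXv_norm, smul_eq_mul]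
      have hne : Real.sqrt (μ X i) ≠ 0 := by
        rw [Real.sqrt_ne_zero']
        exact lt_of_le_of_ne (mu_nonneg X i) (Ne.symm hi)
      field_simp
      exact hσ i
    have h2 : u i ⬝ᵥ (X *ᵥ v X i) = ∑ c, p i c * q i c := by
      rw [hX, ← Matrix.mulVec_mulVec, Matrix.dotProduct_mulVec]
      rfl
    rw [h1, h2]
    have : ∀ c ∈ Finset.univ (α := Fin k), p i c * q i c ≤ (p i c ^ 2 + q i c ^ 2)/2 := by
      intro c _
      nlinarith [sq_nonneg (p i c - q i c)]
    calc ∑ c, p i c * q i c ≤ ∑ c, (p i c ^ 2 + q i c ^ 2)/2 := Finset.sum_le_sum this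
    _ = (∑ c, p i c ^ 2 + ∑ c, q i c ^ 2)/2 := by rw [← Finset.sum_add_distrib, Finset.sum_div]
  have hq_total : ∑ i, ∑ c, q i c ^ 2 = frobNorm H ^ 2 := by
    rw [Finset.sum_comm, frobNorm_sq]
    have hcol : ∀ c : Fin k, ∑ i, q i c ^ 2 = ∑ b, H b c ^ 2 := by
      intro c
      have hqe : ∀ i, q i c = v X i ⬝ᵥ (fun b => H b c) := by
        intro i
        simp [hq, Matrix.mulVec, dotProduct, Matrix.transpose_apply, mul_comm]
      simp_rw [hqe]
      rw [parseval]
      simp [dotProduct, sq]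
    simp_rw [hcol]
    rw [Finset.sum_comm]
  have hp_total : ∑ i, ∑ c, p i c ^ 2 ≤ frobNorm W ^ 2 := by
    rw [Finset.sum_comm, frobNorm_sq]
    have hcol : ∀ c : Fin k, ∑ i, p i c ^ 2 ≤ ∑ a, W a c ^ 2 := by
      intro c
      have hpe : ∀ i, p i c = u i ⬝ᵥ (fun a => W a c) := by
        intro i
        simp [hp, Matrix.vecMul, dotProduct]
      simp_rw [hpe]
      have := bessel u horth hnorm (fun a => W a c)
      simpa [dotProduct, sq] using this
    calc ∑ c : Fin k, ∑ i, p i c ^ 2 ≤ ∑ c : Fin k, ∑ a, W a c ^ 2 :=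
      Finset.sum_le_sum fun c _ => hcol c
    _ = ∑ a, ∑ c, W a c ^ 2 := by rw [Finset.sum_comm]
  calc nuclearNorm X = ∑ i, Real.sqrt (μ X i) := nuclear_eq X
  _ ≤ ∑ i, (∑ c, p i c ^ 2 + ∑ c, q i c ^ 2) / 2 := Finset.sum_le_sum fun i _ => key i
  _ = (∑ i, ∑ c, p i c ^ 2 + ∑ i, ∑ c, q i c ^ 2) / 2 := by
      rw [← Finset.sum_add_distrib, Finset.sum_div]
  _ ≤ (frobNorm W ^ 2 + frobNorm H ^ 2) / 2 := by
      rw [hq_total]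
      linarith [hp_total]

end MFAux

namespace MFAux

lemma sum_col_prod {k : ℕ} {α : Type*} [Fintype α] [DecidableEq α] (e : α ↪ Fin k) (f g : α → ℝ) :
    ∑ j : Fin k, (∑ i, if e i = j then f i else 0) * (∑ i, if e i = j then g i else 0)
      = ∑ i, f i * g i := by
  have h1 : ∀ j : Fin k, (∑ i, if e i = j then f i else 0) * (∑ i, if e i = j then g i else 0)
      = ∑ i, ∑ i', (if e i = j then f i else 0) * (if e i' = j then g i' else 0) := by
    intro j; rw [Finset.sum_mul_sum]
  simp_rw [h1]
  rw [Finset.sum_comm]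
  have h2 : ∀ i, ∑ j : Fin k, ∑ i', (if e i = j then f i else 0) * (if e i' = j then g i' else 0)
      = ∑ i', ∑ j : Fin k, (if e i = j then f i else 0) * (if e i' = j then g i' else 0) :=
    fun i => by rw [Finset.sum_comm]
  simp_rw [h2]
  have h3 : ∀ i i', ∑ j : Fin k, (if e i = j then f i else 0) * (if e i' = j then g i' else 0)
      = if i' = i then f i * g i' else 0 := by
    intro i i'
    rw [Finset.sum_eq_single (e i)]
    · rw [if_pos rfl]
      by_cases h : i' = i
      · subst h; simp
      · have hne : e i' ≠ e i := fun hc => h (e.injective hc)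
        rw [if_neg hne, mul_zero, if_neg h]
    · intro j _ hj
      rw [if_neg (Ne.symm hj), zero_mul]
    · simp
  simp_rw [h3]
  simp [Finset.sum_ite_eq]

lemma sum_subtype_eq {n : ℕ} (p : Fin n → Prop) [DecidablePred p] (F : Fin n → ℝ)
    (h0 : ∀ i, ¬ p i → F i = 0) :
    ∑ i : {i // p i}, F i.1 = ∑ i, F i := by
  rw [← Finset.sum_subtype (Finset.univ.filter p) (fun i => by simp) F]
  exact Finset.sum_filter_of_ne (fun i _ hne => by_contra fun hp => hne (h0 i hp))

lemma exists_factorization {m n k : ℕ} (X : Matrix (Fin m) (Fin n) ℝ) (hk : X.rank ≤ k) :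
    ∃ (W : Matrix (Fin m) (Fin k) ℝ) (H : Matrix (Fin n) (Fin k) ℝ),
      W * Hᵀ = X ∧ frobNorm W ^ 2 + frobNorm H ^ 2 = 2 * nuclearNorm X := by
  classical
  have hcard : Fintype.card {i // μ X i ≠ 0} ≤ k := by
    have h2 := (isHermitian_transpose_mul_self X).rank_eq_card_non_zero_eigs
    have h3 : X.rank = Fintype.card {i // μ X i ≠ 0} := by
      rw [← Matrix.rank_transpose_mul_self X]
      exact h2
    exact h3 ▸ hk
  have hcard' : Fintype.card {i // μ X i ≠ 0} ≤ Fintype.card (Fin k) := by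
    simpa using hcard
  obtain ⟨e⟩ : Nonempty ({i // μ X i ≠ 0} ↪ Fin k) :=
    Function.Embedding.nonempty_of_card_le hcard'
  set τ : {i // μ X i ≠ 0} → ℝ := fun i => Real.sqrt (Real.sqrt (μ X i.1)) with hτ
  have hμpos : ∀ i : {i // μ X i ≠ 0}, 0 < μ X i.1 :=
    fun i => lt_of_le_of_ne (mu_nonneg X i.1) (Ne.symm i.2)
  have hτpos : ∀ i, 0 < τ i := fun i => Real.sqrt_pos.mpr (Real.sqrt_pos.mpr (hμpos i))
  have hτsq : ∀ i, τ i * τ i = Real.sqrt (μ X i.1) :=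
    fun i => Real.mul_self_sqrt (Real.sqrt_nonneg _)
  set W : Matrix (Fin m) (Fin k) ℝ :=
    Matrix.of fun a j => ∑ i : {i // μ X i ≠ 0}, if e i = j then (τ i)⁻¹ * (X *ᵥ v X i.1) a else 0
    with hW
  set H : Matrix (Fin n) (Fin k) ℝ :=
    Matrix.of fun b j => ∑ i : {i // μ X i ≠ 0}, if e i = j then τ i * v X i.1 b else 0 with hH
  refine ⟨W, H, ?_, ?_⟩
  · ext a b
    rw [Matrix.mul_apply]
    simp only [Matrix.transpose_apply, hW, hH, Matrix.of_apply]
    rw [sum_col_prod e (fun i => (τ i)⁻¹ * (X *ᵥ v X i.1) a) (fun i => τ i * v X i.1 b)]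
    have hterm : ∀ i : {i // μ X i ≠ 0},
        (τ i)⁻¹ * (X *ᵥ v X i.1) a * (τ i * v X i.1 b) = (X *ᵥ v X i.1) a * v X i.1 b := by
      intro i
      field_simp [(hτpos i).ne']
    simp_rw [hterm]
    have hfull : ∑ i : {i // μ X i ≠ 0}, (X *ᵥ v X i.1) a * v X i.1 b
        = ∑ i : Fin n, (X *ᵥ v X i) a * v X i b := by
      refine sum_subtype_eq (fun i => μ X i ≠ 0) (fun i => (X *ᵥ v X i) a * v X i b) ?_
      intro i hi
      rw [not_not] at hi
      show (X *ᵥ v X i) a * v X i b = 0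
      rw [hXv_zero X hi]
      simp
    rw [hfull, reconstruct]
  · have hWsq : frobNorm W ^ 2 = ∑ i : {i // μ X i ≠ 0}, Real.sqrt (μ X i.1) := by
      rw [frobNorm_sq]
      have hrow : ∀ a : Fin m, ∑ j, W a j ^ 2
          = ∑ i : {i // μ X i ≠ 0}, ((τ i)⁻¹ * (X *ᵥ v X i.1) a) ^ 2 := by
        intro a
        simp only [hW, Matrix.of_apply, sq]
        exact sum_col_prod e _ _
      simp_rw [hrow]
      rw [Finset.sum_comm]
      refine Finset.sum_congr rfl fun i _ => ?_
      have : ∑ a, ((τ i)⁻¹ * (X *ᵥ v X i.1) a) ^ 2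
          = ((τ i)⁻¹)^2 * ∑ a, ((X *ᵥ v X i.1) a)^2 := by
        rw [Finset.mul_sum]
        exact Finset.sum_congr rfl fun a _ => by ring
      rw [this]
      have hXn : ∑ a, ((X *ᵥ v X i.1) a)^2 = μ X i.1 := by
        have := hXv_norm X i.1
        simpa [dotProduct, sq] using this
      rw [hXn]
      have h1 : ((τ i)⁻¹)^2 = (Real.sqrt (μ X i.1))⁻¹ := by
        rw [sq, ← mul_inv, hτsq]
      rw [h1]
      rw [← Real.sq_sqrt (mu_nonneg X i.1), sq]
      field_simp
      rw [Real.sqrt_sq (Real.sqrt_nonneg _), sq, mul_div_assoc, div_self (Real.sqrt_pos.mpr (hμpos i)).ne', mul_one]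
    have hHsq : frobNorm H ^ 2 = ∑ i : {i // μ X i ≠ 0}, Real.sqrt (μ X i.1) := by
      rw [frobNorm_sq]
      have hrow : ∀ b : Fin n, ∑ j, H b j ^ 2
          = ∑ i : {i // μ X i ≠ 0}, (τ i * v X i.1 b) ^ 2 := by
        intro b
        simp only [hH, Matrix.of_apply, sq]
        exact sum_col_prod e _ _
      simp_rw [hrow]
      rw [Finset.sum_comm]
      refine Finset.sum_congr rfl fun i _ => ?_
      have : ∑ b, (τ i * v X i.1 b) ^ 2 = (τ i)^2 * ∑ b, (v X i.1 b)^2 := by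
        rw [Finset.mul_sum]
        exact Finset.sum_congr rfl fun b _ => by ring
      rw [this]
      have hvn : ∑ b, (v X i.1 b)^2 = 1 := by
        have := hvv X i.1 i.1
        simpa [dotProduct, sq] using this
      rw [hvn, mul_one, sq, hτsq]
    rw [hWsq, hHsq, nuclear_eq]
    have hfull : ∑ i : {i // μ X i ≠ 0}, Real.sqrt (μ X i.1)
        = ∑ i : Fin n, Real.sqrt (μ X i) := by
      refine sum_subtype_eq (fun i => μ X i ≠ 0) (fun i => Real.sqrt (μ X i)) ?_
      intro i hi
      rw [not_not] at hi
      show Real.sqrt (μ X i) = 0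
      rw [hi, Real.sqrt_zero]
    rw [hfull]
    ring

end MFAux

/-- If `(W*, H*)` globally minimizes the factorized objective and the lifted convex
problem has a global minimizer of rank at most `k`, then `X* = W* (H*)ᵀ` globally
minimizes the lifted convex objective. -/
theorem mf_min_gives_mc_min {m n k : ℕ}
    (f : Matrix (Fin m) (Fin n) ℝ → ℝ) (hf : ConvexOn ℝ Set.univ f)
    (lam : ℝ) (hlam : 0 < lam)
    (Wstar : Matrix (Fin m) (Fin k) ℝ) (Hstar : Matrix (Fin n) (Fin k) ℝ)
    (hmin : IsMinOn
      (fun p : Matrix (Fin m) (Fin k) ℝ × Matrix (Fin n) (Fin k) ℝ =>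
        f (p.1 * p.2ᵀ) + lam / 2 * (frobNorm p.1 ^ 2 + frobNorm p.2 ^ 2))
      Set.univ (Wstar, Hstar))
    (hconv : ∃ Xhat : Matrix (Fin m) (Fin n) ℝ,
      IsMinOn (fun X => f X + lam * nuclearNorm X) Set.univ Xhat ∧ Xhat.rank ≤ k) :
    IsMinOn (fun X => f X + lam * nuclearNorm X) Set.univ (Wstar * Hstarᵀ) := by
  obtain ⟨Xhat, hXhat, hrank⟩ := hconv
  obtain ⟨Wh, Hh, hWH, hnorm⟩ := MFAux.exists_factorization Xhat hrank
  rw [isMinOn_iff]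
  intro X _
  have h1 : f (Wstar * Hstarᵀ) + lam * nuclearNorm (Wstar * Hstarᵀ)
      ≤ f (Wstar * Hstarᵀ) + lam / 2 * (frobNorm Wstar ^ 2 + frobNorm Hstar ^ 2) := by
    have := MFAux.nuclear_le Wstar Hstar
    have h := mul_le_mul_of_nonneg_left this (le_of_lt hlam)
    have he : lam * ((frobNorm Wstar ^ 2 + frobNorm Hstar ^ 2) / 2)
        = lam / 2 * (frobNorm Wstar ^ 2 + frobNorm Hstar ^ 2) := by ring
    linarith
  have h2 : f (Wstar * Hstarᵀ) + lam / 2 * (frobNorm Wstar ^ 2 + frobNorm Hstar ^ 2)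
      ≤ f (Wh * Hhᵀ) + lam / 2 * (frobNorm Wh ^ 2 + frobNorm Hh ^ 2) :=
    isMinOn_iff.mp hmin (Wh, Hh) (Set.mem_univ _)
  have h3 : f (Wh * Hhᵀ) + lam / 2 * (frobNorm Wh ^ 2 + frobNorm Hh ^ 2)
      = f Xhat + lam * nuclearNorm Xhat := by
    rw [hWH, hnorm]
    ring
  have h4 : f Xhat + lam * nuclearNorm Xhat ≤ f X + lam * nuclearNorm X :=
    isMinOn_iff.mp hXhat X (Set.mem_univ _)
  calc f (Wstar * Hstarᵀ) + lam * nuclearNorm (Wstar * Hstarᵀ)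
      ≤ f (Wstar * Hstarᵀ) + lam / 2 * (frobNorm Wstar ^ 2 + frobNorm Hstar ^ 2) := h1
  _ ≤ f (Wh * Hhᵀ) + lam / 2 * (frobNorm Wh ^ 2 + frobNorm Hh ^ 2) := h2
  _ = f Xhat + lam * nuclearNorm Xhat := h3
  _ ≤ f X + lam * nuclearNorm X := h4
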